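/- Let Z = (Z₀, Z₁) be a bivariate Gaussian vector with mean 0 and positive definite covariance Σ, let 𝒜 = {(z₀,z₁) ∈ ℝ² : z₀ ≤ z₁} and 𝒜_∘ = {(z,z) : z ∈ ℝ}. Define q_Z(z) = (Z - z)ᵀ Σ⁻¹ (Z - z), let Z_• minimize q_Z over 𝒜 and Z_∘ minimize q_Z over 𝒜_∘, and set L = q_Z(Z_∘) - q_Z(Z_•). Then P(L = 0) = 1/2 and for every x > 0, P(L > x) = (1/2) P(χ²₁ > x), i.e., L is distributed as W·χ²₁ with W ~ Bernoulli(1/2) independent of χ²₁. -/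

import Mathlib

set_option maxRecDepth 8000
set_option maxHeartbeats 1000000

open MeasureTheory ProbabilityTheory Matrix Real Set
open scoped ENNReal NNReal

/-- The centered bivariate Gaussian measure with positive definite covariance `S`,
defined via its density with respect to Lebesgue measure on `Fin 2 → ℝ`. -/
noncomputable def gaussian2 (S : Matrix (Fin 2) (Fin 2) ℝ) : Measure (Fin 2 → ℝ) :=
  volume.withDensity fun z =>
    ENNReal.ofReal ((2 * Real.pi)⁻¹ * (Real.sqrt S.det)⁻¹ *
      Real.exp (-(1 / 2) * (z ⬝ᵥ (S⁻¹ *ᵥ z))))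

/-- The squared `Σ`-Mahalanobis distance `q(z, w) = (z-w)ᵀ Σ⁻¹ (z-w)`. -/
noncomputable def mahalanobisSq (S : Matrix (Fin 2) (Fin 2) ℝ) (z w : Fin 2 → ℝ) : ℝ :=
  (z - w) ⬝ᵥ (S⁻¹ *ᵥ (z - w))

lemma combo_pos (S : Matrix (Fin 2) (Fin 2) ℝ) (hS : S.PosDef) :
    0 < S 0 0 - 2 * S 0 1 + S 1 1 := by
  have hsym : S 1 0 = S 0 1 := by rw [← hS.1.apply 0 1]; simp
  have h := hS.dotProduct_mulVec_pos (x := ![1, -1]) (by intro h; simpa using congrFun h 0)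
  simp [Matrix.mulVec, dotProduct, Fin.sum_univ_two, hsym] at h
  linarith

lemma refl_lint (g : ℝ → ℝ≥0∞) (hg : Measurable g) {s : Set ℝ} (hs : MeasurableSet s) :
    ∫⁻ t in Neg.neg ⁻¹' s, g (-t) = ∫⁻ t in s, g t :=
  (Measure.measurePreserving_neg (volume : Measure ℝ)).setLIntegral_comp_preimage hs hg

lemma gauss_total : ∫⁻ t : ℝ, ENNReal.ofReal ((Real.sqrt (2 * π))⁻¹ * Real.exp (-t ^ 2 / 2)) = 1 := by
  have h := lintegral_gaussianPDF_eq_one 0 (v := 1) one_ne_zero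
  rw [← h]
  congr 1 with t
  rw [gaussianPDF, gaussianPDFReal]
  norm_num

lemma gauss_meas : Measurable fun t : ℝ => ENNReal.ofReal ((Real.sqrt (2 * π))⁻¹ * Real.exp (-t ^ 2 / 2)) := by
  fun_prop

lemma gauss_half : ∫⁻ t in Ici (0:ℝ), ENNReal.ofReal ((Real.sqrt (2 * π))⁻¹ * Real.exp (-t ^ 2 / 2)) = 1/2 := by
  set g : ℝ → ℝ≥0∞ := fun t => ENNReal.ofReal ((Real.sqrt (2 * π))⁻¹ * Real.exp (-t ^ 2 / 2)) with hg'
  have hg : Measurable g := gauss_meas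
  have hsplit : (∫⁻ t in Iio (0:ℝ), g t) + (∫⁻ t in Ici (0:ℝ), g t) = 1 := by
    rw [← lintegral_union measurableSet_Ici (by
      simp [Set.disjoint_left]), Iio_union_Ici, setLIntegral_univ]
    exact gauss_total
  have hrefl : (∫⁻ t in Iio (0:ℝ), g t) = ∫⁻ t in Ici (0:ℝ), g t := by
    have h1 : (∫⁻ t in Iio (0:ℝ), g t) = ∫⁻ t in Ioi (0:ℝ), g t := by
      have := refl_lint g hg (measurableSet_Iio (a := (0:ℝ)))
      rw [show Neg.neg ⁻¹' Iio (0:ℝ) = Ioi 0 by ext t; simp [neg_lt_zero]] at this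
      rw [← this]
      refine lintegral_congr fun t => ?_
      simp only [hg']
      norm_num
    rw [h1]
    exact setLIntegral_congr Ioi_ae_eq_Ici
  rw [hrefl, ← two_mul] at hsplit
  rw [ENNReal.eq_div_iff two_ne_zero ENNReal.ofNat_ne_top, hsplit]

lemma sqrt_image {x : ℝ} (hx : 0 < x) : Real.sqrt '' Ioi x = Ioi (Real.sqrt x) := by
  ext t
  constructor
  · rintro ⟨y, hy, rfl⟩
    exact Real.sqrt_lt_sqrt hx.le hy
  · intro ht
    have htpos : 0 < t := lt_of_le_of_lt (Real.sqrt_nonneg x) ht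
    refine ⟨t ^ 2, ?_, Real.sqrt_sq htpos.le⟩
    have := Real.sq_sqrt hx.le
    simp only [mem_Ioi] at ht ⊢
    nlinarith [Real.sqrt_nonneg x]

lemma gauss_tail {x : ℝ} (hx : 0 < x) :
    ∫⁻ t in Iio (-Real.sqrt x), ENNReal.ofReal ((Real.sqrt (2 * π))⁻¹ * Real.exp (-t ^ 2 / 2))
      = (1 / 2) * gammaMeasure (1 / 2) (1 / 2) (Ioi x) := by
  set g : ℝ → ℝ≥0∞ := fun t => ENNReal.ofReal ((Real.sqrt (2 * π))⁻¹ * Real.exp (-t ^ 2 / 2)) with hg'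
  have hg : Measurable g := gauss_meas
  -- reflection
  have h1 : ∫⁻ t in Iio (-Real.sqrt x), g t = ∫⁻ t in Ioi (Real.sqrt x), g t := by
    rw [← refl_lint g hg (measurableSet_Iio (a := -Real.sqrt x))]
    rw [show Neg.neg ⁻¹' Iio (-Real.sqrt x) = Ioi (Real.sqrt x) by ext t; simp]
    refine lintegral_congr fun t => ?_
    simp only [hg']
    norm_num
  -- change of variables
  have h2 : ∫⁻ t in Ioi (Real.sqrt x), g t
      = ∫⁻ y in Ioi x, ENNReal.ofReal |1 / (2 * Real.sqrt y)| * g (Real.sqrt y) := by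
    rw [← sqrt_image hx]
    have hinj : InjOn Real.sqrt (Ioi x) := fun a ha b hb h =>
      (Real.sqrt_inj (le_of_lt (hx.trans ha)) (le_of_lt (hx.trans hb))).mp h
    have hder : ∀ y ∈ Ioi x, HasFDerivWithinAt Real.sqrt
        ((1 : ℝ →L[ℝ] ℝ).smulRight (1 / (2 * Real.sqrt y))) (Ioi x) y := fun y hy =>
      (Real.hasDerivAt_sqrt (ne_of_gt (hx.trans hy))).hasDerivWithinAt.hasFDerivWithinAt
    have := lintegral_image_eq_lintegral_abs_det_fderiv_mul volume measurableSet_Ioi hder hinj g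
    rw [this]
    refine setLIntegral_congr_fun measurableSet_Ioi (fun y hy => ?_)
    rw [ContinuousLinearMap.det_smulRight]; simp
  rw [h1, h2]
  -- gamma side
  rw [gammaMeasure, withDensity_apply _ measurableSet_Ioi,
    show ∫⁻ y in Ioi x, gammaPDF (1/2) (1/2) y
      = ∫⁻ y in Ioi x, (1/2 : ℝ≥0∞)⁻¹ * ((1/2 : ℝ≥0∞) * gammaPDF (1/2) (1/2) y) by
        refine lintegral_congr fun y => ?_
        rw [← mul_assoc, ENNReal.inv_mul_cancel (by norm_num) (by norm_num), one_mul]]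
  rw [lintegral_const_mul' _ _ (by norm_num : ((1:ℝ≥0∞)/2)⁻¹ ≠ ⊤)]
  rw [← mul_assoc]
  rw [show (1/2 : ℝ≥0∞) * (1/2 : ℝ≥0∞)⁻¹ = 1 by
    rw [ENNReal.mul_inv_cancel (by norm_num) (by norm_num)], one_mul]
  refine setLIntegral_congr_fun measurableSet_Ioi (fun y hy => ?_)
  have hy0 : 0 < y := hx.trans hy
  have hsy : 0 < Real.sqrt y := Real.sqrt_pos.mpr hy0
  rw [gammaPDF_of_nonneg hy0.le, hg']
  simp only []
  rw [Real.sq_sqrt hy0.le]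
  rw [abs_of_pos (by positivity)]
  rw [show (1/2 : ℝ≥0∞) = ENNReal.ofReal (1/2 : ℝ) by
    rw [ENNReal.ofReal_div_of_pos (by norm_num)]; norm_num]
  rw [← ENNReal.ofReal_mul (by positivity), ← ENNReal.ofReal_mul (by norm_num)]
  congr 1
  rw [Real.Gamma_one_half_eq]
  rw [show ((1:ℝ)/2) - 1 = -(1/2) by norm_num, Real.rpow_neg hy0.le]
  rw [show ((1:ℝ)/2) ^ ((1:ℝ)/2) = Real.sqrt (1/2) by rw [Real.sqrt_eq_rpow]]
  rw [show y ^ ((1:ℝ)/2) = Real.sqrt y by rw [Real.sqrt_eq_rpow]]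
  rw [show Real.sqrt (1/2 : ℝ) = (Real.sqrt 2)⁻¹ by
    rw [one_div, Real.sqrt_inv]]
  rw [Real.sqrt_mul (by norm_num : (0:ℝ) ≤ 2)]
  have hpi : 0 < Real.sqrt π := Real.sqrt_pos.mpr Real.pi_pos
  have h2 : 0 < Real.sqrt 2 := by positivity
  rw [show -(1/2 * y) = -y/2 by ring]
  field_simp

lemma mahalanobis_min (S : Matrix (Fin 2) (Fin 2) ℝ) (hS : S.PosDef) (z y yc : Fin 2 → ℝ)
    (hy : y 0 ≤ y 1)
    (hmin : ∀ w : Fin 2 → ℝ, w 0 ≤ w 1 → mahalanobisSq S z y ≤ mahalanobisSq S z w)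
    (hyc : yc 0 = yc 1)
    (hminc : ∀ w : Fin 2 → ℝ, w 0 = w 1 → mahalanobisSq S z yc ≤ mahalanobisSq S z w) :
    mahalanobisSq S z yc - mahalanobisSq S z y
      = (min (z 0 - z 1) 0) ^ 2 / (S 0 0 - 2 * S 0 1 + S 1 1) := by
  set p := S 0 0 with hp'
  set q := S 0 1 with hq'
  set r := S 1 1 with hr'
  have hsym : S 1 0 = q := by
    rw [hq', ← hS.1.apply 0 1]; simp
  have hd : S.det = p * r - q ^ 2 := by
    rw [Matrix.det_fin_two, hsym]; ring
  have hdpos : 0 < S.det := hS.det_pos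
  have hppos : 0 < p := by
    have h := hS.dotProduct_mulVec_pos (x := ![1, 0]) (by intro h; simpa using congrFun h 0)
    simpa [Matrix.mulVec, dotProduct, Fin.sum_univ_two] using h
  have hcpos : 0 < p - 2*q + r := by
    have h := hS.dotProduct_mulVec_pos (x := ![1, -1]) (by intro h; simpa using congrFun h 0)
    simp [Matrix.mulVec, dotProduct, Fin.sum_univ_two, hsym] at h
    linarith
  have hmah : ∀ z w : Fin 2 → ℝ, mahalanobisSq S z w =
      (r * (z 0 - w 0)^2 - 2*q*(z 0 - w 0)*(z 1 - w 1) + p * (z 1 - w 1)^2) / S.det := by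
    intro z w
    rw [mahalanobisSq, Matrix.inv_def, Matrix.adjugate_fin_two]
    simp [Matrix.mulVec, dotProduct, Fin.sum_univ_two, Ring.inverse_eq_inv', hsym,
      Matrix.smul_apply]
    field_simp
    ring
  set c := p - 2*q + r with hc'
  set d := S.det with hd''
  have hdne : d ≠ 0 := ne_of_gt hdpos
  have hcne : c ≠ 0 := ne_of_gt hcpos
  have key : r * (p-q)^2 - 2*q*(p-q)*(q-r) + p*(q-r)^2 = d * c := by
    rw [hd]; ring
  -- lower bound over line / halfplane
  have hlow : ∀ z y : Fin 2 → ℝ, ((z 0 - y 0) - (z 1 - y 1))^2 / c ≤ mahalanobisSq S z y := by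
    intro z y
    rw [hmah, div_le_div_iff₀ hcpos hdpos]
    have idq : (r * (z 0 - y 0)^2 - 2*q*(z 0 - y 0)*(z 1 - y 1) + p*(z 1 - y 1)^2) * c
        - ((z 0 - y 0) - (z 1 - y 1))^2 * d
        = ((q - r) * (z 0 - y 0) - (p - q) * (z 1 - y 1))^2 := by
      rw [hc', hd]; ring
    nlinarith [sq_nonneg ((q - r) * (z 0 - y 0) - (p - q) * (z 1 - y 1))]
  have hnonneg : ∀ z y : Fin 2 → ℝ, 0 ≤ mahalanobisSq S z y := by
    intro z y
    rw [hmah]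
    apply div_nonneg _ hdpos.le
    have idq : (r * (z 0 - y 0)^2 - 2*q*(z 0 - y 0)*(z 1 - y 1) + p*(z 1 - y 1)^2) * p
        = d * (z 0 - y 0)^2 + (p * (z 1 - y 1) - q * (z 0 - y 0))^2 := by
      rw [hd]; ring
    have h2 : 0 ≤ (r * (z 0 - y 0)^2 - 2*q*(z 0 - y 0)*(z 1 - y 1) + p*(z 1 - y 1)^2) * p := by
      rw [idq]; positivity
    exact (mul_nonneg_iff_of_pos_right hppos).mp h2
  -- the witness
  have hwit : ∀ z : Fin 2 → ℝ,
      (![z 0 - (z 0 - z 1) * (p - q) / c, z 1 - (z 0 - z 1) * (q - r) / c] : Fin 2 → ℝ) 0 =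
      (![z 0 - (z 0 - z 1) * (p - q) / c, z 1 - (z 0 - z 1) * (q - r) / c] : Fin 2 → ℝ) 1 ∧
      mahalanobisSq S z ![z 0 - (z 0 - z 1) * (p - q) / c, z 1 - (z 0 - z 1) * (q - r) / c]
        = (z 0 - z 1)^2 / c := by
    intro z
    constructor
    · simp only [Matrix.cons_val_zero, Matrix.cons_val_one, Matrix.head_cons]
      field_simp
      ring
    · rw [hmah]
      simp only [Matrix.cons_val_zero, Matrix.cons_val_one, Matrix.head_cons]
      have hd1 : d * d⁻¹ = 1 := mul_inv_cancel₀ hdne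
      have hc1 : c * c⁻¹ = 1 := mul_inv_cancel₀ hcne
      linear_combination (d⁻¹ * (z 0 - z 1)^2 * c⁻¹^2) * key
        + ((z 0 - z 1)^2 * c⁻¹ * c * c⁻¹) * hd1 + ((z 0 - z 1)^2 * c⁻¹) * hc1
  have hcirc_val : ∀ z y : Fin 2 → ℝ, y 0 = y 1 →
      (∀ w : Fin 2 → ℝ, w 0 = w 1 → mahalanobisSq S z y ≤ mahalanobisSq S z w) →
      mahalanobisSq S z y = (z 0 - z 1)^2 / c := by
    intro z y hy hmin
    refine le_antisymm ?_ ?_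
    · calc mahalanobisSq S z y ≤ _ := hmin _ (hwit z).1
        _ = (z 0 - z 1)^2 / c := (hwit z).2
    · have h := hlow z y
      have e : z 0 - y 0 - (z 1 - y 1) = z 0 - z 1 := by rw [hy]; ring
      rwa [e] at h
  have hbullet_val : ∀ z y : Fin 2 → ℝ, y 0 ≤ y 1 →
      (∀ w : Fin 2 → ℝ, w 0 ≤ w 1 → mahalanobisSq S z y ≤ mahalanobisSq S z w) →
      mahalanobisSq S z y = (max (z 0 - z 1) 0)^2 / c := by
    intro z y hy hmin
    rcases le_total (z 0 - z 1) 0 with ht | ht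
    · rw [max_eq_right ht]
      have h0 : mahalanobisSq S z z = 0 := by rw [hmah]; simp
      have h1 : mahalanobisSq S z y ≤ 0 := by
        calc mahalanobisSq S z y ≤ mahalanobisSq S z z := hmin z (by linarith)
          _ = 0 := h0
      have := le_antisymm h1 (hnonneg z y)
      rw [this]; simp
    · rw [max_eq_left ht]
      refine le_antisymm ?_ ?_
      · calc mahalanobisSq S z y ≤ _ := hmin _ (hwit z).1.le
          _ = (z 0 - z 1)^2 / c := (hwit z).2
      · have h := hlow z y
        have e : (z 0 - z 1)^2 ≤ (z 0 - y 0 - (z 1 - y 1))^2 := by nlinarith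
        calc (z 0 - z 1)^2 / c ≤ (z 0 - y 0 - (z 1 - y 1))^2 / c := by
              gcongr
          _ ≤ mahalanobisSq S z y := h
  rw [hcirc_val z yc hyc hminc, hbullet_val z y hy hmin]
  rcases le_total (z 0 - z 1) 0 with ht | ht
  · rw [max_eq_right ht, min_eq_left ht]; ring
  · rw [max_eq_left ht, min_eq_right ht]; ring

lemma gauss_exp_total : ∫⁻ t : ℝ, ENNReal.ofReal (Real.exp (-t ^ 2 / 2)) = ENNReal.ofReal (Real.sqrt (2 * π)) := by
  have h := gauss_total
  have hpos : (0:ℝ) < Real.sqrt (2 * π) := Real.sqrt_pos.mpr (by positivity)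
  have hX0 : ENNReal.ofReal (Real.sqrt (2 * π)) ≠ 0 := ne_of_gt (ENNReal.ofReal_pos.mpr hpos)
  have hXt : ENNReal.ofReal (Real.sqrt (2 * π)) ≠ ⊤ := ENNReal.ofReal_ne_top
  have hrw : ∀ t : ℝ, ENNReal.ofReal ((Real.sqrt (2 * π))⁻¹ * Real.exp (-t ^ 2 / 2))
      = (ENNReal.ofReal (Real.sqrt (2 * π)))⁻¹ * ENNReal.ofReal (Real.exp (-t ^ 2 / 2)) := by
    intro t
    rw [ENNReal.ofReal_mul (by positivity), ENNReal.ofReal_inv_of_pos hpos]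
  simp_rw [hrw] at h
  rw [lintegral_const_mul' _ _ (ENNReal.inv_ne_top.mpr hX0)] at h
  calc ∫⁻ t : ℝ, ENNReal.ofReal (Real.exp (-t ^ 2 / 2))
      = ENNReal.ofReal (Real.sqrt (2 * π)) * ((ENNReal.ofReal (Real.sqrt (2 * π)))⁻¹ * ∫⁻ t : ℝ, ENNReal.ofReal (Real.exp (-t ^ 2 / 2))) := by
        rw [← mul_assoc, ENNReal.mul_inv_cancel hX0 hXt, one_mul]
    _ = ENNReal.ofReal (Real.sqrt (2 * π)) := by rw [h, mul_one]

lemma gaussian2_band (S : Matrix (Fin 2) (Fin 2) ℝ) (hS : S.PosDef) {B : Set ℝ} (hB : MeasurableSet B) :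
    gaussian2 S ((fun z : Fin 2 → ℝ => z 0 - z 1) ⁻¹' B)
      = ∫⁻ t in (fun t : ℝ => Real.sqrt (S 0 0 - 2 * S 0 1 + S 1 1) * t) ⁻¹' B,
          ENNReal.ofReal ((Real.sqrt (2 * π))⁻¹ * Real.exp (-t ^ 2 / 2)) := by
  set p := S 0 0 with hp'
  set q := S 0 1 with hq'
  set r := S 1 1 with hr'
  have hsym : S 1 0 = q := by rw [hq', ← hS.1.apply 0 1]; simp
  set d := S.det with hd''
  have hd : d = p * r - q ^ 2 := by rw [hd'', Matrix.det_fin_two, hsym]; ring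
  have hdpos : 0 < d := hS.det_pos
  have hppos : 0 < p := by
    have h := hS.dotProduct_mulVec_pos (x := ![1, 0]) (by intro h; simpa using congrFun h 0)
    simpa [Matrix.mulVec, dotProduct, Fin.sum_univ_two] using h
  set c := p - 2*q + r with hc'
  have hcpos : 0 < c := by
    have h := hS.dotProduct_mulVec_pos (x := ![1, -1]) (by intro h; simpa using congrFun h 0)
    simp [Matrix.mulVec, dotProduct, Fin.sum_univ_two, hsym] at h
    rw [hc']; linarith
  have hdne : d ≠ 0 := ne_of_gt hdpos
  have hcne : c ≠ 0 := ne_of_gt hcpos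
  have key : r * (p-q)^2 - 2*q*(p-q)*(q-r) + p*(q-r)^2 = d * c := by
    rw [hc', hd]; ring
  -- quadratic form formula
  have hform : ∀ z : Fin 2 → ℝ, z ⬝ᵥ (S⁻¹ *ᵥ z) = (r * (z 0)^2 - 2*q*(z 0)*(z 1) + p * (z 1)^2) / d := by
    intro z
    rw [Matrix.inv_def, Matrix.adjugate_fin_two, ← hd'', ← hp', ← hq', ← hr']
    simp [Matrix.mulVec, dotProduct, Fin.sum_univ_two, Ring.inverse_eq_inv', hsym,
      Matrix.smul_apply]
    field_simp
    ring
  set s1 := Real.sqrt c with hs1'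
  set s2 := Real.sqrt (d / c) with hs2'
  have hs1 : s1 ^ 2 = c := Real.sq_sqrt hcpos.le
  have hs2 : s2 ^ 2 = d / c := Real.sq_sqrt (by positivity)
  have hs1pos : 0 < s1 := Real.sqrt_pos.mpr hcpos
  have hs2pos : 0 < s2 := Real.sqrt_pos.mpr (by positivity)
  set M : Matrix (Fin 2) (Fin 2) ℝ := Matrix.of ![![(p - q)/s1, s2], ![(q - r)/s1, s2]] with hM'
  have hdetM : M.det = s2 * c / s1 := by
    rw [Matrix.det_fin_two]
    simp [hM', hc']
    field_simp
    ring
  have hdetMpos : 0 < M.det := by rw [hdetM]; positivity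
  have hdetsqrt : M.det = Real.sqrt d := by
    have e : Real.sqrt (d / c) = Real.sqrt d / s1 := by rw [hs1', Real.sqrt_div hdpos.le]
    rw [hdetM, hs2', e, show Real.sqrt d / s1 * c / s1 = Real.sqrt d * (c / (s1 * s1)) by ring,
      ← hs1, pow_two, div_self (by positivity : s1 * s1 ≠ 0), mul_one]
  have hs1ne : s1 ≠ 0 := ne_of_gt hs1pos
  have hMv0 : ∀ u : Fin 2 → ℝ, (M *ᵥ u) 0 = (p - q)/s1 * u 0 + s2 * u 1 := by
    intro u; simp [hM', Matrix.mulVec, dotProduct, Fin.sum_univ_two]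
  have hMv1 : ∀ u : Fin 2 → ℝ, (M *ᵥ u) 1 = (q - r)/s1 * u 0 + s2 * u 1 := by
    intro u; simp [hM', Matrix.mulVec, dotProduct, Fin.sum_univ_two]
  have hdiff : ∀ u : Fin 2 → ℝ, (M *ᵥ u) 0 - (M *ᵥ u) 1 = s1 * u 0 := by
    intro u; rw [hMv0, hMv1]
    field_simp
    linear_combination (-u 0) * (hs1.trans hc')
  have hs2c : s2 ^ 2 * c = d := by rw [hs2]; field_simp
  have hquad : ∀ u : Fin 2 → ℝ, (M *ᵥ u) ⬝ᵥ (S⁻¹ *ᵥ (M *ᵥ u)) = (u 0)^2 + (u 1)^2 := by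
    intro u
    rw [hform, hMv0, hMv1, div_eq_iff hdne]
    have keye := key
    rw [hc'] at keye
    have hs1c := hs1.trans hc'
    have hs2ce : s2 ^ 2 * (p - 2*q + r) = d := by rw [← hc']; exact hs2c
    have hs1inv : s1 * s1⁻¹ = 1 := mul_inv_cancel₀ hs1ne
    linear_combination (u 0^2 * s1⁻¹^2) * keye - (u 0^2 * d * s1⁻¹^2) * hs1c
      + (u 0^2 * d * (s1 * s1⁻¹ + 1)) * hs1inv + (u 1^2) * hs2ce
  -- measurability of the quadratic form and density
  have hqm : Measurable fun z : Fin 2 → ℝ => z ⬝ᵥ (S⁻¹ *ᵥ z) := by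
    have e : (fun z : Fin 2 → ℝ => z ⬝ᵥ (S⁻¹ *ᵥ z))
        = fun z => (r * (z 0)^2 - 2*q*(z 0)*(z 1) + p * (z 1)^2) / d := funext hform
    rw [e]; fun_prop
  set f : (Fin 2 → ℝ) → ℝ≥0∞ := fun z =>
    ENNReal.ofReal ((2 * Real.pi)⁻¹ * (Real.sqrt d)⁻¹ *
      Real.exp (-(1 / 2) * (z ⬝ᵥ (S⁻¹ *ᵥ z)))) with hf'
  have hfmeas : Measurable f :=
    Measurable.ennreal_ofReal
      ((Real.measurable_exp.comp (hqm.const_mul (-(1/2)))).const_mul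
        ((2 * Real.pi)⁻¹ * (Real.sqrt d)⁻¹))
  set A : Set (Fin 2 → ℝ) := (fun z : Fin 2 → ℝ => z 0 - z 1) ⁻¹' B with hA'
  have hA : MeasurableSet A :=
    ((measurable_pi_apply 0).sub (measurable_pi_apply 1)) hB
  have hgauss_apply : gaussian2 S A = ∫⁻ z, A.indicator f z ∂volume := by
    rw [lintegral_indicator hA]
    simp only [gaussian2, hf', ← hd'']
    rw [withDensity_apply _ hA]
  have hTmeas : Measurable (Matrix.toLin' M) :=
    (Matrix.toLin' M).continuous_of_finiteDimensional.measurable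
  have hvol : (volume : Measure (Fin 2 → ℝ))
      = ENNReal.ofReal M.det • Measure.map (Matrix.toLin' M) volume := by
    rw [Real.map_matrix_volume_pi_eq_smul_volume_pi (ne_of_gt hdetMpos), smul_smul,
      abs_of_pos (inv_pos.mpr hdetMpos), ← ENNReal.ofReal_mul hdetMpos.le,
      mul_inv_cancel₀ (ne_of_gt hdetMpos), ENNReal.ofReal_one, one_smul]
  have hstep1 : gaussian2 S A
      = ENNReal.ofReal M.det * ∫⁻ u, A.indicator f (M *ᵥ u) ∂volume := by
    rw [hgauss_apply]
    conv_lhs => rw [hvol]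
    rw [lintegral_smul_measure, lintegral_map (hfmeas.indicator hA) hTmeas]
    simp only [Matrix.toLin'_apply, smul_eq_mul]
  set T : Set ℝ := (fun t : ℝ => s1 * t) ⁻¹' B with hT'
  have hTm : MeasurableSet T := (measurable_id.const_mul s1) hB
  set F : ℝ → ℝ≥0∞ := fun t => T.indicator
    (fun t => ENNReal.ofReal ((2 * Real.pi)⁻¹ * (Real.sqrt d)⁻¹ * Real.exp (-t^2/2))) t with hF'
  set G : ℝ → ℝ≥0∞ := fun t => ENNReal.ofReal (Real.exp (-t^2/2)) with hG'
  have hFm : Measurable F := by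
    apply Measurable.indicator _ hTm
    fun_prop
  have hGm : Measurable G := by fun_prop
  have hpoint : ∀ u : Fin 2 → ℝ, A.indicator f (M *ᵥ u) = F (u 0) * G (u 1) := by
    intro u
    have hmem : (M *ᵥ u ∈ A) ↔ u 0 ∈ T := by
      simp only [hA', hT', Set.mem_preimage]
      rw [hdiff u]
    simp only [hF', hG']
    by_cases h : u 0 ∈ T
    · rw [Set.indicator_of_mem (hmem.mpr h), Set.indicator_of_mem h, hf']
      simp only [hquad u]
      rw [← ENNReal.ofReal_mul (by positivity)]
      congr 1
      rw [show -(1/2) * ((u 0)^2 + (u 1)^2) = (-(u 0)^2/2) + (-(u 1)^2/2) by ring, Real.exp_add]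
      ring
    · rw [Set.indicator_of_notMem (fun hc0 => h (hmem.mp hc0)), Set.indicator_of_notMem h,
        zero_mul]
  have hfub : ∫⁻ u : Fin 2 → ℝ, F (u 0) * G (u 1) ∂volume = (∫⁻ t, F t) * (∫⁻ t, G t) := by
    have hmp := (volume_preserving_finTwoArrow ℝ).symm
    calc ∫⁻ u : Fin 2 → ℝ, F (u 0) * G (u 1) ∂volume
        = ∫⁻ x : ℝ × ℝ, F ((MeasurableEquiv.finTwoArrow.symm x) 0)
            * G ((MeasurableEquiv.finTwoArrow.symm x) 1) ∂volume := by
          exact (hmp.lintegral_comp ((hFm.comp (measurable_pi_apply 0)).mul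
            (hGm.comp (measurable_pi_apply 1)))).symm
      _ = ∫⁻ x : ℝ × ℝ, F x.1 * G x.2 ∂volume := by
          apply lintegral_congr fun x => ?_
          simp [MeasurableEquiv.finTwoArrow]
      _ = (∫⁻ t, F t) * (∫⁻ t, G t) := by
          rw [Measure.volume_eq_prod, lintegral_prod_mul hFm.aemeasurable hGm.aemeasurable]
  have hFint : ∫⁻ t, F t ∂volume
      = ENNReal.ofReal ((2 * Real.pi)⁻¹ * (Real.sqrt d)⁻¹)
        * ∫⁻ t in T, ENNReal.ofReal (Real.exp (-t^2/2)) := by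
    rw [hF', lintegral_indicator hTm]
    rw [← lintegral_const_mul' _ _ ENNReal.ofReal_ne_top]
    refine setLIntegral_congr_fun hTm (fun t ht => ?_)
    rw [← ENNReal.ofReal_mul (by positivity)]
  have hGint : ∫⁻ t, G t ∂volume = ENNReal.ofReal (Real.sqrt (2 * π)) := gauss_exp_total
  -- final combination
  rw [hstep1, lintegral_congr hpoint, hfub, hFint, hGint]
  have htgt : ∫⁻ t in T, ENNReal.ofReal ((Real.sqrt (2 * π))⁻¹ * Real.exp (-t ^ 2 / 2))
      = ENNReal.ofReal ((Real.sqrt (2 * π))⁻¹) * ∫⁻ t in T, ENNReal.ofReal (Real.exp (-t^2/2)) := by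
    rw [← lintegral_const_mul' _ _ ENNReal.ofReal_ne_top]
    refine setLIntegral_congr_fun hTm (fun t ht => ?_)
    rw [← ENNReal.ofReal_mul (by positivity)]
  rw [htgt]
  rw [show ENNReal.ofReal M.det * (ENNReal.ofReal ((2 * Real.pi)⁻¹ * (Real.sqrt d)⁻¹)
      * (∫⁻ t in T, ENNReal.ofReal (Real.exp (-t^2/2))) * ENNReal.ofReal (Real.sqrt (2 * π)))
    = (ENNReal.ofReal M.det * ENNReal.ofReal ((2 * Real.pi)⁻¹ * (Real.sqrt d)⁻¹)
      * ENNReal.ofReal (Real.sqrt (2 * π))) * (∫⁻ t in T, ENNReal.ofReal (Real.exp (-t^2/2)))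
    by ring]
  congr 1
  rw [← ENNReal.ofReal_mul hdetMpos.le, ← ENNReal.ofReal_mul (by positivity)]
  congr 1
  rw [hdetsqrt]
  have hdsq : 0 < Real.sqrt d := Real.sqrt_pos.mpr hdpos
  have h2pi : 0 < Real.sqrt (2 * π) := Real.sqrt_pos.mpr (by positivity)
  have hsq : Real.sqrt (2 * π) * Real.sqrt (2 * π) = 2 * π :=
    Real.mul_self_sqrt (by positivity)
  have e1 : Real.sqrt 2 ^ 2 = (2:ℝ) := Real.sq_sqrt (by norm_num)
  have e2 : Real.sqrt π ^ 2 = π := Real.sq_sqrt Real.pi_pos.le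
  have e3 : Real.sqrt (2 * π) ^ 2 = 2 * π := Real.sq_sqrt (by positivity)
  field_simp
  linear_combination e3

/-- Corollary 1: let `Z ~ N(0, Σ)` with `Σ` positive definite, `𝒜 = {z₀ ≤ z₁}`,
`𝒜∘ = {z₀ = z₁}`, and let `Z•`, `Z∘` be the Mahalanobis projections of `Z` onto `𝒜`
and `𝒜∘`. With `L = q_Z(Z∘) - q_Z(Z•)`, one has `P(L = 0) = 1/2` and, for `x > 0`,
`P(L > x) = (1/2) P(χ²₁ > x)`; i.e. `L ~ W χ²₁` with `W ~ Bernoulli(1/2)` independent. -/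
theorem likelihood_ratio_limit_law
    {Ω : Type*} [MeasureSpace Ω] [IsProbabilityMeasure (ℙ : Measure Ω)]
    (S : Matrix (Fin 2) (Fin 2) ℝ) (hS : S.PosDef)
    (Z Zbullet Zcirc : Ω → Fin 2 → ℝ)
    (hZ : Measure.map Z ℙ = gaussian2 S)
    (hZbullet : ∀ ω, Zbullet ω ∈ {z : Fin 2 → ℝ | z 0 ≤ z 1} ∧
      ∀ y ∈ {z : Fin 2 → ℝ | z 0 ≤ z 1},
        mahalanobisSq S (Z ω) (Zbullet ω) ≤ mahalanobisSq S (Z ω) y)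
    (hZcirc : ∀ ω, Zcirc ω ∈ {z : Fin 2 → ℝ | z 0 = z 1} ∧
      ∀ y ∈ {z : Fin 2 → ℝ | z 0 = z 1},
        mahalanobisSq S (Z ω) (Zcirc ω) ≤ mahalanobisSq S (Z ω) y)
    (L : Ω → ℝ)
    (hL : ∀ ω, L ω = mahalanobisSq S (Z ω) (Zcirc ω) - mahalanobisSq S (Z ω) (Zbullet ω)) :
    ℙ {ω | L ω = 0} = 1 / 2 ∧
    ∀ x : ℝ, 0 < x →
      ℙ {ω | x < L ω}
        = (1 / 2) * ProbabilityTheory.gammaMeasure (1 / 2) (1 / 2) (Set.Ioi x) := by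
  have hcpos : 0 < S 0 0 - 2 * S 0 1 + S 1 1 := combo_pos S hS
  have hscpos : 0 < Real.sqrt (S 0 0 - 2 * S 0 1 + S 1 1) := Real.sqrt_pos.mpr hcpos
  have hLf : ∀ ω, L ω = (min (Z ω 0 - Z ω 1) 0) ^ 2 / (S 0 0 - 2 * S 0 1 + S 1 1) := by
    intro ω
    rw [hL ω]
    exact mahalanobis_min S hS (Z ω) (Zbullet ω) (Zcirc ω) (hZbullet ω).1
      (fun w hw => (hZbullet ω).2 w hw) (hZcirc ω).1 (fun w hw => (hZcirc ω).2 w hw)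
  -- total mass of gaussian2 is 1, hence Z is a.e.-measurable
  have huniv : gaussian2 S Set.univ = 1 := by
    have h := gaussian2_band S hS (B := Set.univ) MeasurableSet.univ
    simp only [Set.preimage_univ] at h
    rw [h, Measure.restrict_univ]
    exact gauss_total
  have hZae : AEMeasurable Z ℙ := by
    by_contra hc0
    rw [Measure.map_of_not_aemeasurable hc0] at hZ
    rw [← hZ] at huniv
    simp at huniv
  have hprob : ∀ B : Set ℝ, MeasurableSet B →
      ℙ (Z ⁻¹' ((fun z : Fin 2 → ℝ => z 0 - z 1) ⁻¹' B))
        = gaussian2 S ((fun z : Fin 2 → ℝ => z 0 - z 1) ⁻¹' B) := by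
    intro B hB
    rw [← hZ, Measure.map_apply_of_aemeasurable hZae
      (show MeasurableSet ((fun z : Fin 2 → ℝ => z 0 - z 1) ⁻¹' B) from
        ((measurable_pi_apply 0).sub (measurable_pi_apply 1)) hB)]
  constructor
  · have hset1 : {ω | L ω = 0}
        = Z ⁻¹' ((fun z : Fin 2 → ℝ => z 0 - z 1) ⁻¹' (Set.Ici 0)) := by
      ext ω
      simp only [Set.mem_setOf_eq, Set.mem_preimage, Set.mem_Ici]
      rw [hLf ω]
      constructor
      · intro h
        by_contra hneg
        push_neg at hneg
        rw [min_eq_left hneg.le, div_eq_zero_iff] at h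
        rcases h with h | h
        · have := (pow_eq_zero_iff (two_ne_zero)).mp h
          linarith
        · exact absurd h (ne_of_gt hcpos)
      · intro h
        rw [min_eq_right h]
        simp
    rw [hset1, hprob _ measurableSet_Ici, gaussian2_band S hS measurableSet_Ici]
    have hpre : (fun t : ℝ => Real.sqrt (S 0 0 - 2 * S 0 1 + S 1 1) * t) ⁻¹' (Set.Ici 0)
        = Set.Ici 0 := by
      ext t
      simp only [Set.mem_preimage, Set.mem_Ici]
      exact mul_nonneg_iff_of_pos_left hscpos
    rw [hpre]
    exact gauss_half
  · intro x hx
    have hxc : (0:ℝ) ≤ x * (S 0 0 - 2 * S 0 1 + S 1 1) := by positivity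
    have hset2 : {ω | x < L ω}
        = Z ⁻¹' ((fun z : Fin 2 → ℝ => z 0 - z 1) ⁻¹'
            (Set.Iio (-Real.sqrt (x * (S 0 0 - 2 * S 0 1 + S 1 1))))) := by
      ext ω
      simp only [Set.mem_setOf_eq, Set.mem_preimage, Set.mem_Iio]
      rw [hLf ω]
      set t := Z ω 0 - Z ω 1 with ht'
      constructor
      · intro h
        have h2 : x * (S 0 0 - 2 * S 0 1 + S 1 1) < (min t 0) ^ 2 :=
          (lt_div_iff₀ hcpos).mp h
        have htneg : t < 0 := by
          by_contra hge
          push_neg at hge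
          rw [min_eq_right hge] at h2
          nlinarith
        rw [min_eq_left htneg.le] at h2
        by_contra hge
        push_neg at hge
        nlinarith [Real.sq_sqrt hxc, Real.sqrt_nonneg (x * (S 0 0 - 2 * S 0 1 + S 1 1))]
      · intro h
        have hsn : 0 ≤ Real.sqrt (x * (S 0 0 - 2 * S 0 1 + S 1 1)) := Real.sqrt_nonneg _
        have htneg : t < 0 := by nlinarith
        rw [min_eq_left htneg.le]
        rw [lt_div_iff₀ hcpos]
        nlinarith [Real.sq_sqrt hxc]
    rw [hset2, hprob _ measurableSet_Iio, gaussian2_band S hS measurableSet_Iio]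
    have hpre : (fun t : ℝ => Real.sqrt (S 0 0 - 2 * S 0 1 + S 1 1) * t) ⁻¹'
        (Set.Iio (-Real.sqrt (x * (S 0 0 - 2 * S 0 1 + S 1 1))))
        = Set.Iio (-Real.sqrt x) := by
      ext t
      simp only [Set.mem_preimage, Set.mem_Iio]
      rw [Real.sqrt_mul hx.le,
        show -(Real.sqrt x * Real.sqrt (S 0 0 - 2 * S 0 1 + S 1 1))
          = Real.sqrt (S 0 0 - 2 * S 0 1 + S 1 1) * (-Real.sqrt x) by ring]
      exact mul_lt_mul_iff_right₀ hscpos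
    rw [hpre]
    exact gauss_tail hx
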